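/- Let J be a 2-torsion free and (n−1)-torsion free Jordan ring with nontrivial idempotent e satisfying condition (i), and D : J → J an n-multiplicative derivation with D(e) = 0. Then D(2e) = 0, and D(2^{n−1} a) = 2^{n−1} D(a) for all a ∈ J_{1/2} and all a ∈ J₁. -/
import Mathlib


/-- Peirce 1-component relative to `e`: elements `x` with `e*x = x`. -/
def peirce1 {J : Type*} [Mul J] (e : J) : Set J := {x | e * x = x}

/-- Peirce 1/2-component relative to `e`: elements `x` with `e*x = (1/2)x`, i.e. `e*x + e*x = x`. -/
def peirceHalf {J : Type*} [Mul J] [Add J] (e : J) : Set J := {x | e * x + e * x = x}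

/-- Peirce 0-component relative to `e`: elements `x` with `e*x = 0`. -/
def peirce0 {J : Type*} [Mul J] [Zero J] (e : J) : Set J := {x | e * x = 0}

/-- The right-normed nonassociative monomial `x₁(x₂(⋯(x_{n-1}x_n)⋯))` on a list of arguments. -/
def rnm {J : Type*} [Mul J] [Zero J] : List J → J
  | [] => 0
  | [x] => x
  | x :: y :: l => x * rnm (y :: l)

/-- `d` is an `n`-multiplicative derivation (w.r.t. the right-normed monomial of degree `n`):
`d(m(x₁,…,xₙ)) = Σᵢ m(x₁,…,d(xᵢ),…,xₙ)`. -/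
def IsNDer {J : Type*} [NonUnitalNonAssocRing J] (n : ℕ) (d : J → J) : Prop :=
  ∀ l : List J, l.length = n →
    d (rnm l) = ∑ i ∈ Finset.range n, rnm (l.set i (d (l.getD i 0)))


lemma rnm_cons {J : Type*} [Mul J] [Zero J] (a : J) (l : List J) (h : l ≠ []) :
    rnm (a :: l) = a * rnm l := by
  cases l with
  | nil => exact absurd rfl h
  | cons b l => rfl

lemma rnm_set_zero {J : Type*} [MulZeroClass J] :
    ∀ (l : List J) (i : ℕ), i < l.length → rnm (l.set i 0) = 0 := by
  intro l
  induction l with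
  | nil => intro i h; simp at h
  | cons a l ih =>
    intro i h
    cases i with
    | zero =>
      cases l with
      | nil => rfl
      | cons b l => simpa [rnm] using zero_mul _
    | succ i =>
      have hi : i < l.length := by simpa using h
      have hne : l.set i 0 ≠ [] := by
        intro hc; rw [← List.length_eq_zero_iff, List.length_set] at hc; omega
      show rnm (a :: l.set i 0) = 0
      rw [rnm_cons _ _ hne, ih i hi, mul_zero]

lemma rnm_replicate_append {J : Type*} [Mul J] [Zero J] (y : J) :
    ∀ (k : ℕ) (v : J), rnm (List.replicate k y ++ [v]) = (fun z => y * z)^[k] v := by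
  intro k
  induction k with
  | zero => intro v; rfl
  | succ k ih =>
    intro v
    rw [List.replicate_succ, List.cons_append, rnm_cons _ _ (by simp), ih,
      Function.iterate_succ_apply']

lemma getD_rep {J : Type*} [Zero J] (y v : J) :
    ∀ (k i : ℕ), i < k → (List.replicate k y ++ [v]).getD i 0 = y := by
  intro k
  induction k with
  | zero => omega
  | succ k ih =>
    intro i h
    cases i with
    | zero => rfl
    | succ i => simpa [List.replicate_succ] using ih i (by omega)

lemma getD_rep_last {J : Type*} [Zero J] (y v : J) :
    ∀ (k : ℕ), (List.replicate k y ++ [v]).getD k 0 = v := by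
  intro k
  induction k with
  | zero => rfl
  | succ k ih => simpa [List.replicate_succ] using ih

lemma set_rep_last {J : Type*} (y v w : J) :
    ∀ (k : ℕ), (List.replicate k y ++ [v]).set k w = List.replicate k y ++ [w] := by
  intro k
  induction k with
  | zero => rfl
  | succ k ih => simp [List.replicate_succ, ih]

lemma it_fix {J : Type*} (y v : J) [Mul J] (h : y * v = v) :
    ∀ k : ℕ, (fun z => y * z)^[k] v = v := by
  intro k
  induction k with
  | zero => rfl
  | succ k ih => rw [Function.iterate_succ_apply', ih]; exact h

lemma it_half {J : Type*} [NonUnitalNonAssocCommRing J] (e a : J) (ha : e * a + e * a = a) :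
    ∀ k : ℕ, (fun z => e * z)^[k] ((2 ^ k : ℕ) • a) = a := by
  intro k
  induction k with
  | zero => simp
  | succ k ih =>
    rw [Function.iterate_succ_apply]
    have h1 : e * ((2 ^ (k + 1) : ℕ) • a) = (2 ^ k : ℕ) • a := by
      rw [mul_smul_comm, pow_succ, mul_smul, two_smul, ha]
    simp only [h1]
    exact ih

lemma it_ce {J : Type*} [NonUnitalNonAssocCommRing J] (e : J) :
    ∀ (k : ℕ) (v : J), (fun z => (e + e) * z)^[k] v = (2 ^ k : ℕ) • (fun z => e * z)^[k] v := by
  intro k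
  induction k with
  | zero => intro v; simp
  | succ k ih =>
    intro v
    rw [Function.iterate_succ_apply', Function.iterate_succ_apply', ih]
    rw [mul_smul_comm, add_mul, ← two_smul ℕ (e * _), smul_smul, ← pow_succ]

lemma rnm_cons_rep {J : Type*} [Mul J] [Zero J] (y v : J) (hy : y * y = y) (hv : v * y = v) :
    ∀ m : ℕ, rnm (v :: List.replicate m y) = v := by
  intro m
  cases m with
  | zero => rfl
  | succ m =>
    rw [rnm_cons _ _ (by simp)]
    rw [List.replicate_succ', rnm_replicate_append, it_fix y y hy, hv]

lemma getD_replicate' {J : Type*} [Zero J] (y : J) :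
    ∀ (k i : ℕ), i < k → (List.replicate k y).getD i 0 = y := by
  intro k
  induction k with
  | zero => omega
  | succ k ih =>
    intro i h
    cases i with
    | zero => rfl
    | succ i => simpa [List.replicate_succ] using ih i (by omega)

theorem nDer_two_smul {n : ℕ} (hn : 2 ≤ n) {J : Type*} [NonUnitalNonAssocCommRing J]
    (hJordan : ∀ x y : J, ((x * x) * y) * x = (x * x) * (y * x))
    (h2 : ∀ x : J, x + x = 0 → x = 0)
    (hn1 : ∀ x : J, (n - 1) • x = 0 → x = 0)
    (e : J) (hid : e * e = e) (hne : e ≠ 0) (hnu : ∃ x : J, e * x ≠ x)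
    (hcond1 : ∀ a ∈ peirce1 e, (∀ t ∈ peirceHalf e, t * a = 0) → a = 0)
    (hcond1' : ∀ a ∈ peirce0 e, (∀ t ∈ peirceHalf e, t * a = 0) → a = 0)
    (D : J → J) (hder : IsNDer n D) (hDe : D e = 0) :
    D (e + e) = 0 ∧
    (∀ a ∈ peirceHalf e, D ((2 ^ (n - 1)) • a) = (2 ^ (n - 1)) • D a) ∧
    (∀ a ∈ peirce1 e, D ((2 ^ (n - 1)) • a) = (2 ^ (n - 1)) • D a) := by
  obtain ⟨m, rfl⟩ : ∃ m, n = m + 2 := ⟨n - 2, by omega⟩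
  clear hn hn1 hne hnu hcond1'
  simp only [show m + 2 - 1 = m + 1 from rfl]
  have hce : (e + e) * e = e + e := by rw [add_mul, hid]
  -- master computation for lists `y,…,y,v`
  have master : ∀ y v : J, D y = 0 →
      D ((fun z => y * z)^[m + 1] v) = (fun z => y * z)^[m + 1] (D v) := by
    intro y v hy
    have hlen : (List.replicate (m + 1) y ++ [v]).length = m + 2 := by simp
    have h := hder _ hlen
    rw [rnm_replicate_append] at h
    rw [h, Finset.sum_eq_single_of_mem (m + 1) (Finset.self_mem_range_succ (m + 1))]
    · rw [getD_rep_last, set_rep_last, rnm_replicate_append]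
    · intro i hi hne
      have hik : i < m + 1 := by simp at hi; omega
      rw [getD_rep _ _ _ _ hik, hy]
      exact rnm_set_zero _ _ (by simp; omega)
  -- the linearized Jordan identity
  have lin : ∀ y z : J,
      ((e*e)*y)*z + (((e*z)*y)*e + ((z*e)*y)*e)
        = (e*e)*(y*z) + ((e*z)*(y*e) + ((z*e)*(y*e))) := by
    intro y z
    have hp := hJordan (e + z) y
    have hm' := hJordan (e - z) y
    have hz' := hJordan z y
    have hS : (((e+z)*(e+z))*y)*(e+z) + ((((e-z)*(e-z))*(y*(e-z))) + (((z*z)*(y*z)) + ((z*z)*(y*z))))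
        = ((e+z)*(e+z))*(y*(e+z)) + (((((e-z)*(e-z))*y)*(e-z)) + ((((z*z)*y)*z) + (((z*z)*y)*z))) := by
      rw [hp, ← hm', ← hz']
    refine sub_eq_zero.mp (h2 _ ?_)
    have hexp : ((((e+z)*(e+z))*y)*(e+z) + ((((e-z)*(e-z))*(y*(e-z))) + (((z*z)*(y*z)) + ((z*z)*(y*z)))))
        - (((e+z)*(e+z))*(y*(e+z)) + (((((e-z)*(e-z))*y)*(e-z)) + ((((z*z)*y)*z) + (((z*z)*y)*z))))
        = ((((e*e)*y)*z + (((e*z)*y)*e + ((z*e)*y)*e)) - ((e*e)*(y*z) + ((e*z)*(y*e) + ((z*e)*(y*e)))))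
          + ((((e*e)*y)*z + (((e*z)*y)*e + ((z*e)*y)*e)) - ((e*e)*(y*z) + ((e*z)*(y*e) + ((z*e)*(y*e))))) := by
      simp only [add_mul, mul_add, sub_mul, mul_sub]
      abel
    rw [← hexp, hS, sub_self]
  have hrep : rnm (List.replicate (m + 1) e) = e := by
    rw [List.replicate_succ', rnm_replicate_append, it_fix e e hid]
  have cE : ∀ a : J, a * e = e * a := fun a => mul_comm a e
  -- Step 1: x := D (e+e) satisfies x = x * e
  have hx_e : D (e + e) = D (e + e) * e := by
    have hlen : ((e + e) :: List.replicate (m + 1) e).length = m + 2 := by simp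
    have h := hder _ hlen
    rw [rnm_cons_rep e (e + e) hid hce (m + 1)] at h
    rw [Finset.sum_eq_single_of_mem 0 (Finset.mem_range.mpr (by omega))
      (by
        intro i hi hne
        obtain ⟨j, rfl⟩ : ∃ j, i = j + 1 := ⟨i - 1, by omega⟩
        have hg : ((e + e) :: List.replicate (m + 1) e).getD (j + 1) 0 = e := by
          rw [List.getD_cons_succ]
          exact getD_replicate' e (m + 1) j (by simp at hi; omega)
        rw [hg, hDe]
        exact rnm_set_zero _ _ (by simp at hi ⊢; omega))] at h
    have hf0 : rnm (((e + e) :: List.replicate (m + 1) e).set 0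
        (D (((e + e) :: List.replicate (m + 1) e).getD 0 0))) = D (e + e) * e := by
      show rnm (D (e + e) :: List.replicate (m + 1) e) = D (e + e) * e
      rw [rnm_cons _ _ (by simp), hrep]
    rw [hf0] at h
    exact h
  have hx1 : e * D (e + e) = D (e + e) := by rw [← cE]; exact hx_e.symm
  have hx2 : D (e + e) * e = D (e + e) := hx_e.symm
  -- Step 2: key equation for t in the half component
  have key2 : ∀ t : J, e * t + e * t = t →
      D t = (D t * e + D t * e) + t * D (e + e) := by
    intro t ht
    have hte : t * (e + e) = t := by rw [mul_add, cE, ht]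
    have hlen : (t :: (e + e) :: List.replicate m e).length = m + 2 := by simp
    have h := hder _ hlen
    have hval : rnm (t :: (e + e) :: List.replicate m e) = t := by
      rw [rnm_cons _ _ (by simp), rnm_cons_rep e (e + e) hid hce m, hte]
    rw [hval] at h
    have hzero : ∀ i ∈ Finset.range (m + 2), i ∉ Finset.range 2 →
        rnm ((t :: (e + e) :: List.replicate m e).set i
          (D ((t :: (e + e) :: List.replicate m e).getD i 0))) = 0 := by
      intro i hi hni
      obtain ⟨j, rfl⟩ : ∃ j, i = j + 2 := ⟨i - 2, by simp at hni; omega⟩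
      have hg : (t :: (e + e) :: List.replicate m e).getD (j + 2) 0 = e := by
        rw [List.getD_cons_succ, List.getD_cons_succ]
        exact getD_replicate' e m j (by simp at hi; omega)
      rw [hg, hDe]
      exact rnm_set_zero _ _ (by simp at hi ⊢; omega)
    rw [← Finset.sum_subset (Finset.range_subset_range.mpr (by omega)) hzero,
      Finset.sum_range_succ, Finset.sum_range_one] at h
    have hf0 : rnm ((t :: (e + e) :: List.replicate m e).set 0
        (D ((t :: (e + e) :: List.replicate m e).getD 0 0))) = D t * (e + e) := by
      show rnm (D t :: (e + e) :: List.replicate m e) = D t * (e + e)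
      rw [rnm_cons _ _ (by simp), rnm_cons_rep e (e + e) hid hce m]
    have hf1 : rnm ((t :: (e + e) :: List.replicate m e).set 1
        (D ((t :: (e + e) :: List.replicate m e).getD 1 0))) = t * D (e + e) := by
      show rnm (t :: D (e + e) :: List.replicate m e) = t * D (e + e)
      rw [rnm_cons _ _ (by simp), rnm_cons_rep e (D (e + e)) hid hx2]
    rw [hf0, hf1, mul_add] at h
    exact h
  -- Step 3: for t in the half component, t * D(e+e) is in the half component
  have hwhalf : ∀ t : J, e * t + e * t = t →
      t * D (e + e) = e * (t * D (e + e)) + e * (t * D (e + e)) := by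
    intro t ht
    have h3 := lin t (D (e + e))
    simp only [hid, hx1, hx2, cE, mul_comm (D (e + e))] at h3
    -- h3 : (e*t)*x + (e*(t*x) + e*(t*x)) = e*(t*x) + ((e*t)*x + (e*t)*x)  (hopefully)
    have h4 : ((e * t) * D (e + e) + e * (t * D (e + e))) + e * (t * D (e + e))
        = ((e * t) * D (e + e) + e * (t * D (e + e))) + (e * t) * D (e + e) := by
      rw [add_assoc, h3]; abel
    have hw1p : e * (t * D (e + e)) = (e * t) * D (e + e) := add_left_cancel h4
    conv_lhs => rw [← ht, add_mul]
    rw [← hw1p]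
  -- Step 4: t * D(e+e) = 0
  have hwzero : ∀ t : J, e * t + e * t = t → t * D (e + e) = 0 := by
    intro t ht
    have F1 := key2 t ht
    rw [cE] at F1
    have hwg : t * D (e + e) = D t - (e * D t + e * D t) :=
      eq_sub_of_add_eq (by rw [add_comm]; exact F1.symm)
    have hEw : e * (t * D (e + e)) = e * D t - (e * (e * D t) + e * (e * D t)) := by
      rw [hwg, mul_sub, mul_add]
    have hEEw : e * (e * (t * D (e + e)))
        = e * (e * D t) - (e * (e * (e * D t)) + e * (e * (e * D t))) := by
      rw [hEw, mul_sub, mul_add]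
    have hB := lin e (D t)
    simp only [hid, cE] at hB
    -- hB : e * D t + (e*(e*(e*D t)) + e*(e*(e*D t))) = e*(e*D t) + (e*(e*D t) + e*(e*D t))
    have h6 : e * (e * (e * D t)) + e * (e * (e * D t))
        = (e * (e * D t) + (e * (e * D t) + e * (e * D t))) - e * D t := by
      rw [← hB]; abel
    have hY : e * (e * (t * D (e + e))) = e * (t * D (e + e)) := by
      rw [hEEw, hEw, h6]; abel
    have hEw2 : e * (t * D (e + e))
        = e * (e * (t * D (e + e))) + e * (e * (t * D (e + e))) := by
      conv_lhs => rw [hwhalf t ht]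
      rw [mul_add]
    rw [hY] at hEw2
    have h8 : (0 : J) = e * (t * D (e + e)) := add_left_cancel (by rw [add_zero]; exact hEw2)
    rw [hwhalf t ht, ← h8, add_zero]
  -- Part 1
  have part1 : D (e + e) = 0 := by
    refine hcond1 _ hx1 ?_
    intro t ht
    exact hwzero t ht
  refine ⟨part1, ?_, ?_⟩
  · -- half component
    intro a ha
    have ha' : e * a + e * a = a := ha
    have h5 := master e ((2 ^ (m + 1) : ℕ) • a) hDe
    rw [it_half e a ha' (m + 1)] at h5
    have h6 := master (e + e) ((2 ^ (m + 1) : ℕ) • a) part1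
    have hcb : (e + e) * ((2 ^ (m + 1) : ℕ) • a) = (2 ^ (m + 1) : ℕ) • a := by
      rw [mul_smul_comm, add_mul, ha']
    rw [it_fix _ _ hcb (m + 1), it_ce] at h6
    rw [← h5] at h6
    exact h6
  · -- one component
    intro a ha
    have ha' : e * a = a := ha
    have h7 := master e a hDe
    rw [it_fix e a ha' (m + 1)] at h7
    have h8 := master (e + e) a part1
    rw [it_ce, it_ce, it_fix e a ha' (m + 1)] at h8
    rw [← h7] at h8
    exact h8
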